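/- A fiber A_τ of a modular family of fake elliptic curves π: M → C does not split in M; more precisely, the inclusion H⁰(A_τ, N*_{A_τ/M}) → H⁰(A_τ, ι*Ω¹_M) induced by the conormal sequence is an isomorphism, where both spaces are 1-dimensional, while any holomorphic splitting of the tangent bundle sequence would force h⁰(A_τ, ι*Ω¹_M) ≥ 3. -/

import Mathlib

/-!
STATEMENT 8.  A fiber `A_τ = ℂ²/O_{B,τ}` of a modular family of fake elliptic
curves `π : M → C` does not split in `M`.  The bundle `ι*Ω¹_M` on `A_τ` is the
flat bundle given by the representation
`ρ(λ) = ((1,0,0),(0,1,0),(−λ₁₁,−λ₂₁,1))` of `π₁(A_τ) ≅ O_B`, sitting in the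
conormal sequence `0 → N*_{A_τ/M} ≅ O → ι*Ω¹_M → Ω¹_{A_τ} ≅ O² → 0`
(the subbundle corresponding to the third coordinate, the quotient to the
first two).  The theorem states:
* every holomorphic section of `ι*Ω¹_M` (a ρ-equivariant holomorphic
  `f : ℂ² → ℂ³`) is of the form `(0,0,b)`, `b ∈ ℂ` constant; that is, the
  inclusion `H⁰(A_τ, N*_{A_τ/M}) → H⁰(A_τ, ι*Ω¹_M)` is an isomorphism and
  both spaces are 1-dimensional;
* consequently there is no holomorphic splitting `Ω¹_{A_τ} → ι*Ω¹_M` of the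
  conormal sequence (which would produce, from the standard frame of
  `Ω¹_{A_τ} ≅ O²`, two extra independent sections, forcing `h⁰ ≥ 3`);
  equivalently, the tangent bundle sequence of `A_τ` in `M` does not split.
-/

/-- The period `λ_τ = λ·(τ,1)ᵗ ∈ ℂ²` of `λ ∈ M₂(ℝ)`. -/
noncomputable def period (τ : ℂ) (m : Matrix (Fin 2) (Fin 2) ℝ) : ℂ × ℂ :=
  ((m 0 0 : ℂ) * τ + (m 0 1 : ℂ), (m 1 0 : ℂ) * τ + (m 1 1 : ℂ))

/-- `f : ℂ² → ℂ³` transforms under `O_B` according to the factor of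
automorphy `ρ` of `ι*Ω¹_M` restricted to the fiber `A_τ`. -/
def RhoEquivariant (O : Subring (Matrix (Fin 2) (Fin 2) ℝ)) (τ : ℂ)
    (f : ℂ × ℂ → ℂ × ℂ × ℂ) : Prop :=
  ∀ m ∈ O, ∀ z : ℂ × ℂ,
    (f (z + period τ m)).1 = (f z).1 ∧
    (f (z + period τ m)).2.1 = (f z).2.1 ∧
    (f (z + period τ m)).2.2
      = -(m 0 0 : ℂ) * (f z).1 - (m 1 0 : ℂ) * (f z).2.1 + (f z).2.2

open Bornology Set Module

/-- `period τ` as an `ℝ`-linear map. -/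
noncomputable def periodL (τ : ℂ) : Matrix (Fin 2) (Fin 2) ℝ →ₗ[ℝ] ℂ × ℂ where
  toFun := period τ
  map_add' x y := by
    simp only [period, Matrix.add_apply, Prod.mk_add_mk, Prod.mk.injEq]
    push_cast; constructor <;> ring
  map_smul' r x := by
    simp only [period, Matrix.smul_apply, RingHom.id_apply, Prod.smul_mk, smul_eq_mul,
      Complex.real_smul, Prod.mk.injEq]
    push_cast; constructor <;> ring

lemma periodL_inj {τ : ℂ} (hτ : 0 < τ.im) : Function.Injective (periodL τ) := by
  rw [injective_iff_map_eq_zero]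
  intro m hm
  have h1 : (m 0 0 : ℂ) * τ + (m 0 1 : ℂ) = 0 := congrArg Prod.fst hm
  have h2 : (m 1 0 : ℂ) * τ + (m 1 1 : ℂ) = 0 := congrArg Prod.snd hm
  have i1 : m 0 0 * τ.im = 0 := by simpa using congrArg Complex.im h1
  have i2 : m 1 0 * τ.im = 0 := by simpa using congrArg Complex.im h2
  have e1 : m 0 0 = 0 := by
    rcases mul_eq_zero.1 i1 with h | h; · exact h
    · exact absurd h hτ.ne'
  have e2 : m 1 0 = 0 := by
    rcases mul_eq_zero.1 i2 with h | h; · exact h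
    · exact absurd h hτ.ne'
  have r1 : m 0 0 * τ.re + m 0 1 = 0 := by simpa using congrArg Complex.re h1
  have r2 : m 1 0 * τ.re + m 1 1 = 0 := by simpa using congrArg Complex.re h2
  have e3 : m 0 1 = 0 := by rw [e1] at r1; linarith
  have e4 : m 1 1 = 0 := by rw [e2] at r2; linarith
  ext i j
  fin_cases i <;> fin_cases j <;> simp [e1, e2, e3, e4]

lemma bounded_of_lattice_periodic (b : Basis (Fin 4) ℝ (ℂ × ℂ)) (g : ℂ × ℂ → ℂ)
    (hg : Continuous g)
    (hper : ∀ (n : Fin 4 → ℤ) (z : ℂ × ℂ), g (z + ∑ i, (n i : ℝ) • b i) = g z) :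
    IsBounded (range g) := by
  have hK : IsCompact ((fun t : Fin 4 → ℝ => ∑ i, t i • b i) '' Icc 0 1) :=
    isCompact_Icc.image (by fun_prop)
  refine (hK.image hg).isBounded.subset ?_
  rintro _ ⟨z, rfl⟩
  refine ⟨∑ i, Int.fract (b.repr z i) • b i,
    ⟨fun i => Int.fract (b.repr z i), ?_, rfl⟩, ?_⟩
  · constructor
    · intro i; exact Int.fract_nonneg _
    · intro i; exact (Int.fract_lt_one _).le
  · have hz : z = (∑ i, Int.fract (b.repr z i) • b i)
        + ∑ i, ((⌊b.repr z i⌋ : ℤ) : ℝ) • b i := by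
      rw [← Finset.sum_add_distrib]
      conv_lhs => rw [← b.sum_repr z]
      refine Finset.sum_congr rfl fun i _ => ?_
      rw [← add_smul, Int.fract_add_floor]
    conv_rhs => rw [hz]
    exact (hper (fun i => ⌊b.repr z i⌋) _).symm

lemma const_of_lattice_periodic (b : Basis (Fin 4) ℝ (ℂ × ℂ)) (g : ℂ × ℂ → ℂ)
    (hg : Differentiable ℂ g)
    (hper : ∀ (n : Fin 4 → ℤ) (z : ℂ × ℂ), g (z + ∑ i, (n i : ℝ) • b i) = g z) :
    ∀ z, g z = g 0 := fun z =>
  hg.apply_eq_apply_of_bounded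
    (bounded_of_lattice_periodic b g hg.continuous hper) z 0

lemma linear_of_additive_differentiable (φ : ℂ → ℂ) (hφ : Differentiable ℂ φ)
    (hadd : ∀ s t, φ (s + t) = φ s + φ t) : ∀ s, φ s = s * φ 1 := by
  have h0 : φ 0 = 0 := by
    have := hadd 0 0; simp only [add_zero] at this; linear_combination -this
  have hd : ∀ s, deriv φ s = deriv φ 0 := by
    intro s
    have h1 : φ = fun t => φ s + φ (t - s) := funext fun t => by
      rw [← hadd s (t - s), add_sub_cancel]
    calc deriv φ s = deriv (fun t => φ s + φ (t - s)) s := by rw [← h1]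
      _ = deriv (fun t => φ (t - s)) s := deriv_const_add _
      _ = deriv φ (s - s) := deriv_comp_sub_const ..
      _ = deriv φ 0 := by rw [sub_self]
  have hconst : ∀ s, φ s - deriv φ 0 * s = φ 0 - deriv φ 0 * 0 := by
    intro s
    refine is_const_of_deriv_eq_zero (f := fun t => φ t - deriv φ 0 * t)
      (hφ.sub (differentiable_fun_id.const_mul _)) (fun x => ?_) s 0
    rw [deriv_fun_sub (hφ x) ((differentiable_fun_id.const_mul _) x)]
    have hc : deriv (fun y => deriv φ 0 * y) x = deriv φ 0 := by
      simpa using ((hasDerivAt_id x).const_mul (deriv φ 0)).deriv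
    rw [hd x, hc, sub_self]
  intro s
  have h1 := hconst 1
  have h2 := hconst s
  rw [h0] at h1 h2
  simp only [mul_zero, mul_one, sub_zero] at h1 h2
  rw [sub_eq_zero] at h1 h2
  rw [h2, ← h1]
  ring

theorem fiber_of_fake_elliptic_family_does_not_split
    (B : Subalgebra ℚ (Matrix (Fin 2) (Fin 2) ℝ))
    (hdim : Module.finrank ℚ B = 4)
    (hdiv : ∀ x ∈ B, x ≠ 0 → ∃ y ∈ B, x * y = 1 ∧ y * x = 1)
    (O : Subring (Matrix (Fin 2) (Fin 2) ℝ))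
    (hOB : (O : Set (Matrix (Fin 2) (Fin 2) ℝ)) ⊆ (B : Set (Matrix (Fin 2) (Fin 2) ℝ)))
    (gens : Fin 4 → Matrix (Fin 2) (Fin 2) ℝ)
    (hindep : LinearIndependent ℝ gens)
    (hOgen : O.toAddSubgroup = AddSubgroup.closure (Set.range gens))
    (τ : ℂ) (hτ : 0 < τ.im) :
    (∀ f : ℂ × ℂ → ℂ × ℂ × ℂ, Differentiable ℂ f → RhoEquivariant O τ f →
      ∃ b : ℂ, ∀ z, f z = (0, 0, b)) ∧
    ¬ ∃ s₁ s₂ : ℂ × ℂ → ℂ × ℂ × ℂ,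
        Differentiable ℂ s₁ ∧ Differentiable ℂ s₂ ∧
        RhoEquivariant O τ s₁ ∧ RhoEquivariant O τ s₂ ∧
        (∀ z, (s₁ z).1 = 1 ∧ (s₁ z).2.1 = 0) ∧
        (∀ z, (s₂ z).1 = 0 ∧ (s₂ z).2.1 = 1) := by
  classical
  have hM4 : Fintype.card (Fin 4) = finrank ℝ (Matrix (Fin 2) (Fin 2) ℝ) := by
    simp [Module.finrank_matrix]
  have hC4 : Fintype.card (Fin 4) = finrank ℝ (ℂ × ℂ) := by
    simp [Module.finrank_prod, Complex.finrank_real_complex]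
  have hmem : ∀ i, gens i ∈ O := fun i => by
    have : gens i ∈ O.toAddSubgroup := by
      rw [hOgen]; exact AddSubgroup.subset_closure ⟨i, rfl⟩
    exact this
  have hmem' : ∀ n : Fin 4 → ℤ, (∑ i, (n i : ℝ) • gens i) ∈ O := by
    intro n
    have : (∑ i, (n i : ℝ) • gens i) ∈ O.toAddSubgroup := by
      refine AddSubgroup.sum_mem _ fun i _ => ?_
      rw [Int.cast_smul_eq_zsmul]
      refine AddSubgroup.zsmul_mem _ ?_ _
      rw [hOgen]; exact AddSubgroup.subset_closure ⟨i, rfl⟩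
    exact this
  have hind2 : LinearIndependent ℝ (fun i => periodL τ (gens i)) :=
    hindep.map' _ (LinearMap.ker_eq_bot.mpr (periodL_inj hτ))
  set bP : Basis (Fin 4) ℝ (ℂ × ℂ) :=
    basisOfLinearIndependentOfCardEqFinrank hind2 hC4 with hbPdef
  have hbP : ∀ i, bP i = periodL τ (gens i) := fun i => by
    rw [hbPdef, coe_basisOfLinearIndependentOfCardEqFinrank]
  have hlat : ∀ n : Fin 4 → ℤ, ∃ m ∈ O, (∑ i, (n i : ℝ) • bP i) = period τ m := by
    intro n
    refine ⟨∑ i, (n i : ℝ) • gens i, hmem' n, ?_⟩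
    show (∑ i, (n i : ℝ) • bP i) = periodL τ (∑ i, (n i : ℝ) • gens i)
    rw [map_sum]
    refine Finset.sum_congr rfl fun i _ => ?_
    rw [hbP, map_smul]
  have main : ∀ f : ℂ × ℂ → ℂ × ℂ × ℂ, Differentiable ℂ f → RhoEquivariant O τ f →
      ∃ b : ℂ, ∀ z, f z = (0, 0, b) := by
    intro f hf hfe
    have hper1 : ∀ (n : Fin 4 → ℤ) z, (f (z + ∑ i, (n i : ℝ) • bP i)).1 = (f z).1 := by
      intro n z; obtain ⟨m, hm, he⟩ := hlat n; rw [he]; exact (hfe m hm z).1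
    have hper2 : ∀ (n : Fin 4 → ℤ) z, (f (z + ∑ i, (n i : ℝ) • bP i)).2.1 = (f z).2.1 := by
      intro n z; obtain ⟨m, hm, he⟩ := hlat n; rw [he]; exact (hfe m hm z).2.1
    have hc1 : ∀ z, (f z).1 = (f 0).1 :=
      const_of_lattice_periodic bP _ hf.fst hper1
    have hc2 : ∀ z, (f z).2.1 = (f 0).2.1 :=
      const_of_lattice_periodic bP _ hf.snd.fst hper2
    have hcoc : ∀ m ∈ O, ∀ z, (f (z + period τ m)).2.2
        = -(m 0 0 : ℂ) * (f 0).1 - (m 1 0 : ℂ) * (f 0).2.1 + (f z).2.2 := by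
      intro m hm z
      have h := (hfe m hm z).2.2
      rw [h, hc1 z, hc2 z]
    set G : ℂ × ℂ → ℂ := fun z => (f z).2.2 - (f 0).2.2 with hGdef
    have hGdiff : Differentiable ℂ G := hf.snd.snd.sub_const _
    have hGadd : ∀ z w, G (z + w) = G z + G w := by
      intro z w
      have hF := const_of_lattice_periodic bP (fun u => (f (u + w)).2.2 - (f u).2.2)
        ((hf.snd.snd.comp (differentiable_id.add_const w)).sub hf.snd.snd)
        (fun n u => by
          obtain ⟨m, hm, he⟩ := hlat n
          simp only [he]
          have h1 := hcoc m hm u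
          have h2 := hcoc m hm (u + w)
          rw [add_right_comm u (period τ m) w, h2, h1]
          ring) z
      simp only [zero_add] at hF
      simp only [hGdef]
      linear_combination hF
    have hGs : ∀ (s : ℂ) (z : ℂ × ℂ), G (s • z) = s * G z := by
      intro s z
      have hφd : Differentiable ℂ (fun t : ℂ => G (t • z)) :=
        hGdiff.comp (differentiable_id.smul_const z)
      have hφa : ∀ s t : ℂ, G ((s + t) • z) = G (s • z) + G (t • z) := fun s t => by
        rw [add_smul]; exact hGadd _ _
      have h := linear_of_additive_differentiable (fun t : ℂ => G (t • z)) hφd hφa s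
      simpa using h
    set Gl : (ℂ × ℂ) →ₗ[ℝ] ℂ :=
      { toFun := G
        map_add' := hGadd
        map_smul' := fun r z => by
          have hsm : (r : ℂ) • z = r • z := algebraMap_smul ℂ r z
          show G (r • z) = r • G z
          rw [← hsm, hGs, Complex.real_smul] } with hGldef
    set cl : Matrix (Fin 2) (Fin 2) ℝ →ₗ[ℝ] ℂ :=
      { toFun := fun m => -(m 0 0 : ℂ) * (f 0).1 - (m 1 0 : ℂ) * (f 0).2.1
        map_add' := fun x y => by
          simp only [Matrix.add_apply]
          push_cast; ring
        map_smul' := fun r x => by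
          simp only [Matrix.smul_apply, smul_eq_mul, RingHom.id_apply, Complex.real_smul]
          push_cast; ring } with hcldef
    have bgens : Basis (Fin 4) ℝ (Matrix (Fin 2) (Fin 2) ℝ) :=
      basisOfLinearIndependentOfCardEqFinrank hindep hM4
    have hext : Gl.comp (periodL τ) = cl := by
      refine (basisOfLinearIndependentOfCardEqFinrank hindep hM4).ext fun i => ?_
      rw [coe_basisOfLinearIndependentOfCardEqFinrank]
      show Gl (periodL τ (gens i)) = cl (gens i)
      have h := hcoc (gens i) (hmem i) 0
      simp only [zero_add] at h
      show (f (period τ (gens i))).2.2 - (f 0).2.2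
        = -((gens i) 0 0 : ℂ) * (f 0).1 - ((gens i) 1 0 : ℂ) * (f 0).2.1
      rw [h]; ring
    have heval : ∀ m : Matrix (Fin 2) (Fin 2) ℝ,
        G (period τ m) = -(m 0 0 : ℂ) * (f 0).1 - (m 1 0 : ℂ) * (f 0).2.1 :=
      fun m => LinearMap.congr_fun hext m
    have h01 : G ((1 : ℂ), (0 : ℂ)) = 0 := by
      have h := heval !![0,1;0,0]
      simp only [period] at h
      norm_num at h
      convert h using 2 <;> norm_num
    have h11 : G ((0 : ℂ), (1 : ℂ)) = 0 := by
      have h := heval !![0,0;0,1]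
      simp only [period] at h
      norm_num at h
      convert h using 2 <;> norm_num
    have h00 : G (τ, (0 : ℂ)) = -(f 0).1 := by
      have h := heval !![1,0;0,0]
      simp only [period] at h
      norm_num at h
      convert h using 2 <;> norm_num
    have h10 : G ((0 : ℂ), τ) = -(f 0).2.1 := by
      have h := heval !![0,0;1,0]
      simp only [period] at h
      norm_num at h
      convert h using 2 <;> norm_num
    have ha : (f 0).1 = 0 := by
      have h := hGs τ ((1 : ℂ), (0 : ℂ))
      have hsm : τ • ((1 : ℂ), (0 : ℂ)) = (τ, (0 : ℂ)) := by
        simp [Prod.smul_mk]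
      rw [hsm, h00, h01, mul_zero, neg_eq_zero] at h
      exact h
    have hc : (f 0).2.1 = 0 := by
      have h := hGs τ ((0 : ℂ), (1 : ℂ))
      have hsm : τ • ((0 : ℂ), (1 : ℂ)) = ((0 : ℂ), τ) := by
        simp [Prod.smul_mk]
      rw [hsm, h10, h11, mul_zero, neg_eq_zero] at h
      exact h
    have hper3 : ∀ (n : Fin 4 → ℤ) z, (f (z + ∑ i, (n i : ℝ) • bP i)).2.2 = (f z).2.2 := by
      intro n z
      obtain ⟨m, hm, he⟩ := hlat n
      rw [he, hcoc m hm z, ha, hc]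
      ring
    have hc3 : ∀ z, (f z).2.2 = (f 0).2.2 :=
      const_of_lattice_periodic bP _ hf.snd.snd hper3
    refine ⟨(f 0).2.2, fun z => ?_⟩
    have e1 : (f z).1 = 0 := (hc1 z).trans ha
    have e2 : (f z).2.1 = 0 := (hc2 z).trans hc
    have e3 : (f z).2.2 = (f 0).2.2 := hc3 z
    exact Prod.ext e1 (Prod.ext e2 e3)
  refine ⟨main, ?_⟩
  rintro ⟨s₁, s₂, hd₁, hd₂, he₁, he₂, hv₁, hv₂⟩
  obtain ⟨b, hb⟩ := main s₁ hd₁ he₁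
  have h := (hv₁ 0).1
  rw [hb 0] at h
  exact one_ne_zero h.symm
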